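/- Let p be an odd prime and i ∈ F_p^× such that -i is not a square in F_p. Then the number of matrices in GL_2(F_p) with determinant i and trace 0 equals p^2 - p. -/

import Mathlib

theorem card_det_i_trace_zero_nonresidue (p : ℕ) [Fact p.Prime] (hp : Odd p)
    (i : ZMod p) (hi : i ≠ 0) (hsq : ¬ IsSquare (-i)) :
    Nat.card {γ : GL (Fin 2) (ZMod p) |
      Matrix.det (γ : Matrix (Fin 2) (Fin 2) (ZMod p)) = i ∧
      Matrix.trace (γ : Matrix (Fin 2) (Fin 2) (ZMod p)) = 0} = p^2 - p := by
  classical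
  set M : ZMod p → (ZMod p)ˣ → Matrix (Fin 2) (Fin 2) (ZMod p) :=
    fun a b => !![a, (b : ZMod p); (-(a^2 + i)) * ((b⁻¹ : (ZMod p)ˣ) : ZMod p), -a] with hM
  have hdetM : ∀ a b, (M a b).det = i := by
    intro a b
    rw [hM]
    rw [Matrix.det_fin_two_of]
    have hbb : (b : ZMod p) * ((b⁻¹ : (ZMod p)ˣ) : ZMod p) = 1 := by
      exact_mod_cast b.mul_inv
    linear_combination (a^2 + i) * hbb
  have htrM : ∀ a b, (M a b).trace = 0 := by
    intro a b
    rw [hM, Matrix.trace_fin_two_of]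
    ring
  set f : ZMod p × (ZMod p)ˣ → {γ : GL (Fin 2) (ZMod p) |
      Matrix.det (γ : Matrix (Fin 2) (Fin 2) (ZMod p)) = i ∧
      Matrix.trace (γ : Matrix (Fin 2) (Fin 2) (ZMod p)) = 0} :=
    fun ab => ⟨Matrix.GeneralLinearGroup.mkOfDetNeZero (M ab.1 ab.2)
        (by rw [hdetM]; exact hi), hdetM ab.1 ab.2, htrM ab.1 ab.2⟩ with hfdef
  have hval : ∀ ab : ZMod p × (ZMod p)ˣ,
      (((f ab : GL (Fin 2) (ZMod p))) : Matrix (Fin 2) (Fin 2) (ZMod p)) = M ab.1 ab.2 :=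
    fun _ => rfl
  have hf : Function.Bijective f := by
    constructor
    · rintro ⟨a, b⟩ ⟨a', b'⟩ h
      have h2 : M a b = M a' b' := by
        rw [← hval (a, b), ← hval (a', b'), h]
      have ha : a = a' := by
        have := congrFun (congrFun h2 0) 0
        simpa only [hM, Matrix.of_apply, Matrix.cons_val', Matrix.cons_val_zero,
          Matrix.empty_val', Matrix.cons_val_fin_one] using this
      have hb : (b : ZMod p) = b' := by
        have := congrFun (congrFun h2 0) 1
        simpa only [hM, Matrix.of_apply, Matrix.cons_val', Matrix.cons_val_one,
          Matrix.head_cons, Matrix.empty_val', Matrix.cons_val_fin_one, Matrix.cons_val_zero] using this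
      exact Prod.ext ha (Units.ext hb)
    · rintro ⟨γ, hdet, htr⟩
      set a := (γ : Matrix (Fin 2) (Fin 2) (ZMod p)) 0 0 with ha
      set b := (γ : Matrix (Fin 2) (Fin 2) (ZMod p)) 0 1 with hb
      set c := (γ : Matrix (Fin 2) (Fin 2) (ZMod p)) 1 0 with hc
      set d := (γ : Matrix (Fin 2) (Fin 2) (ZMod p)) 1 1 with hd
      have htr' : d = -a := by
        rw [Matrix.trace_fin_two] at htr
        linear_combination htr
      have hdet' : a * d - b * c = i := by
        rw [Matrix.det_fin_two] at hdet
        linear_combination hdet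
      have hbc : b * c = -(a^2 + i) := by rw [htr'] at hdet'; linear_combination -hdet'
      have hne : -(a^2 + i) ≠ 0 := by
        intro h0
        apply hsq
        have : -i = a^2 := by linear_combination h0
        exact ⟨a, by rw [this]; ring⟩
      have hbne : b ≠ 0 := by
        intro h0; apply hne; rw [← hbc, h0, zero_mul]
      refine ⟨(a, Units.mk0 b hbne), ?_⟩
      apply Subtype.ext
      apply Units.ext
      rw [hval]
      have hcval : -(a^2 + i) * (((Units.mk0 b hbne)⁻¹ : (ZMod p)ˣ) : ZMod p) = c := by
        have h1 : (((Units.mk0 b hbne)⁻¹ : (ZMod p)ˣ) : ZMod p) = (b⁻¹ : ZMod p) := by simp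
        rw [h1, ← hbc]
        field_simp
      ext x y
      fin_cases x <;> fin_cases y <;>
        simp only [hM, Matrix.cons_val', Matrix.cons_val_zero, Matrix.cons_val_one,
          Matrix.head_cons, Matrix.empty_val', Matrix.cons_val_fin_one, Matrix.head_fin_const,
          Matrix.of_apply] <;>
        first
          | rfl
          | (exact hcval)
          | (exact htr'.symm)
  have key := Nat.card_eq_of_bijective f hf
  rw [Nat.card_prod, Nat.card_eq_fintype_card, Nat.card_eq_fintype_card, ZMod.card,
    ZMod.card_units] at key
  rw [← key]
  have hp1 : 1 ≤ p := (Fact.out : p.Prime).one_lt.le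
  cases p with
  | zero => simp at hp1
  | succ n =>
    have hx : (n+1)^2 = (n+1) * n + (n+1) := by ring
    rw [hx, Nat.succ_sub_one, Nat.add_sub_cancel]
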